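/- Fix θ ∈ ℝ^d with θ ≠ 0 and assume μ({ω ∈ S^{d−1} : ω^⊤θ = 0}) = 0 and μ({ω ∈ S^{d−1} : ω^⊤θ* = 0}) = 0. Then lim_{z→∞} P( σ(h^⊤θ)·‖h‖ > z and h^⊤θ < 0 | ‖h‖ > z ) = ν({ω ∈ S^{d−1} : ω^⊤θ > 0}). -/

import Mathlib

open MeasureTheory ProbabilityTheory Filter Topology Set

set_option maxHeartbeats 1000000

/-- The logistic function `σ(u) = e^{-u}/(1+e^{-u})`. -/
noncomputable def logisticSigma (u : ℝ) : ℝ := Real.exp (-u) / (1 + Real.exp (-u))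

/-- The stochastic gradient of the ℓ2-regularized logistic loss,
`∇ℓ(θ,x,y) = -σ(h^⊤θ) • h + λ • θ` with `h = y • x`. -/
noncomputable def logisticGrad {d : ℕ} (θ : EuclideanSpace ℝ (Fin d)) (lam : ℝ)
    (xv : EuclideanSpace ℝ (Fin d)) (yv : ℝ) : EuclideanSpace ℝ (Fin d) :=
  (-(logisticSigma (inner ℝ (yv • xv) θ : ℝ))) • (yv • xv) + lam • θ

/-- The measure `ν(A) = μ((-A) ∩ {ω : ω^⊤θ* > 0}) + μ(A ∩ {ω : ω^⊤θ* < 0})`. -/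
noncomputable def nuMeas {d : ℕ} (μ : Measure (EuclideanSpace ℝ (Fin d)))
    (θstar : EuclideanSpace ℝ (Fin d)) (A : Set (EuclideanSpace ℝ (Fin d))) : ENNReal :=
  μ ((fun v => -v) ⁻¹' A ∩ {v | 0 < (inner ℝ v θstar : ℝ)}) +
    μ (A ∩ {v | (inner ℝ v θstar : ℝ) < 0})

lemma one_add_exp_pos (u : ℝ) : 0 < 1 + Real.exp u := by positivity

lemma lsig_pos (u : ℝ) : 0 < logisticSigma u :=
  div_pos (Real.exp_pos _) (one_add_exp_pos _)

lemma w_eq (u : ℝ) : 1 / (1 + Real.exp (-u)) = 1 - logisticSigma u := by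
  have h := one_add_exp_pos (-u)
  rw [logisticSigma, eq_sub_iff_add_eq, ← add_div, div_eq_one_iff_eq h.ne']

lemma lsig_le_exp_neg (u : ℝ) : logisticSigma u ≤ Real.exp (-u) := by
  rw [logisticSigma, div_le_iff₀ (one_add_exp_pos _)]
  nlinarith [Real.exp_pos (-u)]

lemma w_le_one (u : ℝ) : 1 / (1 + Real.exp (-u)) ≤ 1 := by
  rw [div_le_one (one_add_exp_pos _)]; nlinarith [Real.exp_pos (-u)]

lemma w_nonneg (u : ℝ) : 0 ≤ 1 / (1 + Real.exp (-u)) := by positivity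

lemma w_le_exp (u : ℝ) : 1 / (1 + Real.exp (-u)) ≤ Real.exp u := by
  rw [div_le_iff₀ (one_add_exp_pos _)]
  have : Real.exp u * Real.exp (-u) = 1 := by
    rw [← Real.exp_add]; simp
  nlinarith [Real.exp_pos u]

lemma lsig_antitone {u v : ℝ} (h : u ≤ v) : logisticSigma v ≤ logisticSigma u := by
  have h1 := one_add_exp_pos (-u); have h2 := one_add_exp_pos (-v)
  have he : Real.exp (-v) ≤ Real.exp (-u) := Real.exp_le_exp.2 (by linarith)
  rw [logisticSigma, logisticSigma, div_le_div_iff₀ h2 h1]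
  nlinarith [Real.exp_pos (-u), Real.exp_pos (-v)]

lemma lsig_mul_ge {u η : ℝ} (h : Real.exp u ≤ η) : 1 ≤ (1 + η) * logisticSigma u := by
  have h1 := one_add_exp_pos (-u)
  have hmul : Real.exp u * Real.exp (-u) = 1 := by rw [← Real.exp_add]; simp
  rw [logisticSigma, ← mul_div_assoc, le_div_iff₀ h1]
  nlinarith [Real.exp_pos (-u), Real.exp_pos u]

lemma rpow_neg_ge {η α : ℝ} (hη : 0 < η) (hη2 : η ≤ 1/2) (hα : α ≤ 2) (hα0 : 0 < α) :
    1 - 2*η ≤ (1+η) ^ (-α) := by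
  have h1 : (1:ℝ) ≤ 1 + η := by linarith
  have h2 : ((1+η) : ℝ) ^ (-(2:ℝ)) ≤ (1+η) ^ (-α) :=
    Real.rpow_le_rpow_of_exponent_le h1 (by linarith)
  have h3 : ((1+η) : ℝ) ^ (-(2:ℝ)) = ((1+η)^2)⁻¹ := by
    rw [Real.rpow_neg (by linarith), show ((2:ℝ)) = ((2:ℕ):ℝ) by norm_num,
      Real.rpow_natCast]
  have h4 : (1 - 2*η) * (1+η)^2 ≤ 1 := by nlinarith [sq_nonneg η, mul_nonneg (mul_nonneg hη.le hη.le) hη.le]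
  have h5 : (0:ℝ) < (1+η)^2 := by positivity
  have h6 : 1 - 2*η ≤ ((1+η)^2)⁻¹ := by
    rw [← sub_nonneg]
    have heq : ((1+η)^2)⁻¹ - (1 - 2*η) = (1 - (1 - 2*η)*(1+η)^2) / (1+η)^2 := by
      field_simp
    rw [heq]
    apply div_nonneg (by linarith) (le_of_lt h5)
  linarith [h2, h3 ▸ h6]

/-- `lim_{z→∞} P(σ(h^⊤θ)·‖h‖ > z and h^⊤θ < 0 | ‖h‖ > z) = ν({ω : ω^⊤θ > 0})`. -/
theorem logistic_sigma_tail_neg_part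
    {d : ℕ} {Ω : Type*} [MeasurableSpace Ω] (P : Measure Ω) [IsProbabilityMeasure P]
    (x : Ω → EuclideanSpace ℝ (Fin d)) (y : Ω → ℝ)
    (hxmeas : Measurable x) (hymeas : Measurable y)
    (hy : ∀ᵐ ω ∂P, y ω = 1 ∨ y ω = -1)
    (θstar : EuclideanSpace ℝ (Fin d))
    (hcond : ∀ S : Set (EuclideanSpace ℝ (Fin d)), MeasurableSet S →
        (P ({ω | y ω = 1} ∩ x ⁻¹' S)).toReal
          = ∫ ω in x ⁻¹' S, 1 / (1 + Real.exp (-(inner ℝ (x ω) θstar : ℝ))) ∂P)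
    (α : ℝ) (hα : α ∈ Set.Ioo (1:ℝ) 2)
    (hxpos : ∀ z : ℝ, 0 < P {ω | ‖x ω‖ > z})
    (hreg : ∀ t : ℝ, 0 < t →
        Tendsto (fun z : ℝ => (P {ω | ‖x ω‖ > t * z}).toReal / (P {ω | ‖x ω‖ > z}).toReal)
          atTop (𝓝 (t ^ (-α))))
    (μ : Measure (EuclideanSpace ℝ (Fin d))) [IsProbabilityMeasure μ]
    (hμsphere : μ {v | ‖v‖ = 1}ᶜ = 0)
    (hang : ∀ A : Set (EuclideanSpace ℝ (Fin d)), MeasurableSet A → μ (frontier A) = 0 →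
        Tendsto (fun z : ℝ =>
            (P ({ω | (‖x ω‖)⁻¹ • x ω ∈ A} ∩ {ω | ‖x ω‖ > z})).toReal /
              (P {ω | ‖x ω‖ > z}).toReal)
          atTop (𝓝 (μ A).toReal))
    (β1 β2 : ℝ) (hβ1 : 0 < β1) (hβ2 : 0 < β2)
    (hint1 : ∫⁻ v in {v | 0 < (inner ℝ v θstar : ℝ)},
        ENNReal.ofReal ((inner ℝ v θstar : ℝ) ^ (-β1)) ∂μ < ⊤)
    (hint2 : ∫⁻ v in {v | (inner ℝ v θstar : ℝ) < 0},
        ENNReal.ofReal ((-(inner ℝ v θstar : ℝ)) ^ (-β2)) ∂μ < ⊤)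
    (θ : EuclideanSpace ℝ (Fin d)) (hθ : θ ≠ 0)
    (hμθ : μ {v | (inner ℝ v θ : ℝ) = 0} = 0)
    (hμθs : μ {v | (inner ℝ v θstar : ℝ) = 0} = 0) :
    Tendsto (fun z : ℝ =>
        (P ({ω | logisticSigma (inner ℝ (y ω • x ω) θ : ℝ) * ‖y ω • x ω‖ > z ∧
              (inner ℝ (y ω • x ω) θ : ℝ) < 0} ∩ {ω | ‖y ω • x ω‖ > z})).toReal /
          (P {ω | ‖y ω • x ω‖ > z}).toReal)
      atTop (𝓝 ((nuMeas μ θstar {v | 0 < (inner ℝ v θ : ℝ)}).toReal)) := by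
  classical
  obtain ⟨hα1, hα2⟩ := hα
  have hgc : Continuous fun v : EuclideanSpace ℝ (Fin d) => (inner ℝ v θstar : ℝ) :=
    continuous_id.inner continuous_const
  have hfc : Continuous fun v : EuclideanSpace ℝ (Fin d) => (inner ℝ v θ : ℝ) :=
    continuous_id.inner continuous_const
  have hden : ∀ z : ℝ, P {ω | ‖y ω • x ω‖ > z} = P {ω | ‖x ω‖ > z} := by
    intro z
    apply measure_congr
    apply eventuallyEq_set.2
    filter_upwards [hy] with ω hω
    rcases hω with h | h <;> simp [Set.mem_setOf_eq, h, norm_smul]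
  simp only [hden]
  set dir : Ω → EuclideanSpace ℝ (Fin d) := fun ω => (‖x ω‖)⁻¹ • x ω with hdir_def
  have hdirm : Measurable dir := (hxmeas.norm.inv).smul hxmeas
  set T : ℝ → ℝ := fun z => (P {ω | ‖x ω‖ > z}).toReal with hT_def
  have hTpos : ∀ z, 0 < T z := fun z => ENNReal.toReal_pos (hxpos z).ne' (measure_ne_top _ _)
  have hTailm : ∀ z : ℝ, MeasurableSet {ω | ‖x ω‖ > z} := fun z =>
    measurableSet_lt measurable_const hxmeas.norm
  have hy1m : MeasurableSet {ω | y ω = 1} := hymeas (measurableSet_singleton 1)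
  have hy2m : MeasurableSet {ω | y ω = -1} := hymeas (measurableSet_singleton (-1))
  set ρ : ℝ → Set (EuclideanSpace ℝ (Fin d)) → ℝ := fun z A =>
    (P ({ω | dir ω ∈ A} ∩ {ω | ‖x ω‖ > z})).toReal with hρ_def
  set Q1 : ℝ → Set (EuclideanSpace ℝ (Fin d)) → ℝ := fun z A =>
    (P ({ω | y ω = 1} ∩ ({ω | dir ω ∈ A} ∩ {ω | ‖x ω‖ > z}))).toReal with hQ1_def
  set Q2 : ℝ → Set (EuclideanSpace ℝ (Fin d)) → ℝ := fun z A =>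
    (P ({ω | y ω = -1} ∩ ({ω | dir ω ∈ A} ∩ {ω | ‖x ω‖ > z}))).toReal with hQ2_def
  have hang' : ∀ A : Set (EuclideanSpace ℝ (Fin d)), MeasurableSet A → μ (frontier A) = 0 →
      Tendsto (fun z => ρ z A / T z) atTop (𝓝 (μ A).toReal) := fun A hA hfA => hang A hA hfA
  have hkey : ∀ (w : EuclideanSpace ℝ (Fin d)) (ω : Ω), ‖x ω‖ ≠ 0 →
      (inner ℝ (x ω) w : ℝ) = ‖x ω‖ * (inner ℝ (dir ω) w : ℝ) := by
    intro w ω h0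
    simp only [hdir_def]
    rw [real_inner_smul_left]
    field_simp
  have hcond' : ∀ (A : Set (EuclideanSpace ℝ (Fin d))), MeasurableSet A → ∀ z : ℝ,
      Q1 z A = ∫ ω in {ω | dir ω ∈ A} ∩ {ω | ‖x ω‖ > z},
        (1 / (1 + Real.exp (-(inner ℝ (x ω) θstar : ℝ)))) ∂P := by
    intro A hA z
    have hS : MeasurableSet {v : EuclideanSpace ℝ (Fin d) | (‖v‖)⁻¹ • v ∈ A ∧ ‖v‖ > z} := by
      have h1 : Measurable fun v : EuclideanSpace ℝ (Fin d) => (‖v‖)⁻¹ • v :=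
        (measurable_norm.inv).smul measurable_id
      rw [Set.setOf_and]
      exact (h1 hA).inter (measurableSet_lt measurable_const measurable_norm)
    have h2 := hcond _ hS
    have hpre : x ⁻¹' {v | (‖v‖)⁻¹ • v ∈ A ∧ ‖v‖ > z}
        = {ω | dir ω ∈ A} ∩ {ω | ‖x ω‖ > z} := rfl
    rw [hpre] at h2
    exact h2
  have hum : Measurable fun ω => (inner ℝ (x ω) θstar : ℝ) := hxmeas.inner measurable_const
  have hwm : Measurable fun ω => 1 / (1 + Real.exp (-(inner ℝ (x ω) θstar : ℝ))) :=
    measurable_const.div (measurable_const.add (Real.measurable_exp.comp hum.neg))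
  have hwint : Integrable (fun ω => 1 / (1 + Real.exp (-(inner ℝ (x ω) θstar : ℝ)))) P := by
    refine (integrable_const (1:ℝ)).mono' hwm.aestronglyMeasurable (ae_of_all _ fun ω => ?_)
    rw [Real.norm_eq_abs, abs_of_nonneg (w_nonneg _)]
    exact w_le_one _
  have hQ1le : ∀ z A, Q1 z A ≤ ρ z A := fun z A =>
    ENNReal.toReal_mono (measure_ne_top _ _) (measure_mono Set.inter_subset_right)
  have hQ1nonneg : ∀ z A, 0 ≤ Q1 z A := fun z A => ENNReal.toReal_nonneg
  have hQ2nonneg : ∀ z A, 0 ≤ Q2 z A := fun z A => ENNReal.toReal_nonneg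
  have hρnonneg : ∀ z A, 0 ≤ ρ z A := fun z A => ENNReal.toReal_nonneg
  have hρle1 : ∀ z A, ρ z A ≤ 1 := by
    intro z A
    have h2 : P ({ω | dir ω ∈ A} ∩ {ω | ‖x ω‖ > z}) ≤ 1 := by
      simpa using measure_mono (Set.subset_univ ({ω | dir ω ∈ A} ∩ {ω | ‖x ω‖ > z})) (μ := P)
    simpa using ENNReal.toReal_mono (by norm_num) h2
  have hboundA : ∀ δ' : ℝ, 0 < δ' → ∀ A : Set (EuclideanSpace ℝ (Fin d)), MeasurableSet A →
      A ⊆ {v | δ' < (inner ℝ v θstar : ℝ)} → ∀ z : ℝ, 0 < z →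
      (1 - Real.exp (-(z * δ'))) * ρ z A ≤ Q1 z A := by
    intro δ' hδ' A hA hsub z hz
    rw [hcond' A hA z]
    have hsm : MeasurableSet ({ω | dir ω ∈ A} ∩ {ω | ‖x ω‖ > z}) := (hdirm hA).inter (hTailm z)
    have hpt : ∀ ω ∈ {ω | dir ω ∈ A} ∩ {ω | ‖x ω‖ > z},
        (1 - Real.exp (-(z * δ')) : ℝ) ≤ 1 / (1 + Real.exp (-(inner ℝ (x ω) θstar : ℝ))) := by
      intro ω hω
      obtain ⟨hmem, hzω⟩ := hω
      have hzω' : z < ‖x ω‖ := hzω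
      have hnx : (0:ℝ) < ‖x ω‖ := lt_trans hz hzω'
      have hgd : δ' < (inner ℝ (dir ω) θstar : ℝ) := hsub hmem
      have hu : z * δ' ≤ (inner ℝ (x ω) θstar : ℝ) := by
        rw [hkey θstar ω hnx.ne']
        nlinarith
      rw [w_eq]
      have h1 := lsig_le_exp_neg ((inner ℝ (x ω) θstar : ℝ))
      have h2 : Real.exp (-(inner ℝ (x ω) θstar : ℝ)) ≤ Real.exp (-(z * δ')) :=
        Real.exp_le_exp.2 (by linarith)
      linarith
    have hmono := setIntegral_mono_on ((integrable_const _).integrableOn)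
      (hwint.integrableOn) hsm hpt
    rw [setIntegral_const, smul_eq_mul, measureReal_def] at hmono
    simp only [hρ_def]
    linarith
  have hboundB : ∀ δ' : ℝ, 0 < δ' → ∀ A : Set (EuclideanSpace ℝ (Fin d)), MeasurableSet A →
      A ⊆ {v | (inner ℝ v θstar : ℝ) < -δ'} → ∀ z : ℝ, 0 < z →
      Q1 z A ≤ Real.exp (-(z * δ')) * ρ z A := by
    intro δ' hδ' A hA hsub z hz
    rw [hcond' A hA z]
    have hsm : MeasurableSet ({ω | dir ω ∈ A} ∩ {ω | ‖x ω‖ > z}) := (hdirm hA).inter (hTailm z)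
    have hpt : ∀ ω ∈ {ω | dir ω ∈ A} ∩ {ω | ‖x ω‖ > z},
        1 / (1 + Real.exp (-(inner ℝ (x ω) θstar : ℝ))) ≤ Real.exp (-(z * δ')) := by
      intro ω hω
      obtain ⟨hmem, hzω⟩ := hω
      have hzω' : z < ‖x ω‖ := hzω
      have hnx : (0:ℝ) < ‖x ω‖ := lt_trans hz hzω'
      have hgd : (inner ℝ (dir ω) θstar : ℝ) < -δ' := hsub hmem
      have hu : (inner ℝ (x ω) θstar : ℝ) ≤ -(z * δ') := by
        rw [hkey θstar ω hnx.ne']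
        nlinarith [mul_nonneg hnx.le (by linarith : (0:ℝ) ≤ -δ' - (inner ℝ (dir ω) θstar : ℝ)),
          mul_nonneg (by linarith : (0:ℝ) ≤ ‖x ω‖ - z) hδ'.le]
      have h1 := w_le_exp ((inner ℝ (x ω) θstar : ℝ))
      have h2 : Real.exp ((inner ℝ (x ω) θstar : ℝ)) ≤ Real.exp (-(z * δ')) :=
        Real.exp_le_exp.2 hu
      linarith
    have hmono := setIntegral_mono_on (hwint.integrableOn)
      ((integrable_const _).integrableOn) hsm hpt
    rw [setIntegral_const, smul_eq_mul, measureReal_def] at hmono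
    simp only [hρ_def]
    linarith
  have hsplitP : ∀ S : Set Ω, MeasurableSet S →
      (P S).toReal = (P ({ω | y ω = 1} ∩ S)).toReal + (P ({ω | y ω = -1} ∩ S)).toReal := by
    intro S hS
    have hY : P ({ω | y ω = 1} ∪ {ω | y ω = -1})ᶜ = 0 := by
      have h0 : ({ω | y ω = 1} ∪ {ω | y ω = -1})ᶜ = {ω | ¬(y ω = 1 ∨ y ω = -1)} := by
        ext ω; simp
      rw [h0]
      exact ae_iff.mp hy
    have h1 : P S = P (S ∩ ({ω | y ω = 1} ∪ {ω | y ω = -1})) :=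
      (measure_inter_conull hY).symm
    have h2 : S ∩ ({ω | y ω = 1} ∪ {ω | y ω = -1})
        = ({ω | y ω = 1} ∩ S) ∪ ({ω | y ω = -1} ∩ S) := by
      rw [Set.inter_union_distrib_left]
      rw [Set.inter_comm S, Set.inter_comm S]
    have hdisj : Disjoint ({ω | y ω = 1} ∩ S) ({ω | y ω = -1} ∩ S) := by
      apply Set.disjoint_left.mpr
      rintro ω ⟨ha, _⟩ ⟨hb, _⟩
      have ha' : y ω = 1 := ha
      have hb' : y ω = -1 := hb
      rw [ha'] at hb'
      norm_num at hb'
    rw [h1, h2, measure_union hdisj (hy2m.inter hS),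
      ENNReal.toReal_add (measure_ne_top _ _) (measure_ne_top _ _)]
  have hfrIoi : ∀ (F : EuclideanSpace ℝ (Fin d) → ℝ), Continuous F → ∀ c : ℝ,
      μ {v | F v = c} = 0 → μ (frontier {v | c < F v}) = 0 := by
    intro F hF c hc
    refine measure_mono_null ?_ hc
    have h := hF.frontier_preimage_subset (Ioi c)
    rw [frontier_Ioi] at h
    exact h
  have hfrIio : ∀ (F : EuclideanSpace ℝ (Fin d) → ℝ), Continuous F → ∀ c : ℝ,
      μ {v | F v = c} = 0 → μ (frontier {v | F v < c}) = 0 := by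
    intro F hF c hc
    refine measure_mono_null ?_ hc
    have h := hF.frontier_preimage_subset (Iio c)
    rw [frontier_Iio] at h
    exact h
  have hfrIcc : ∀ (F : EuclideanSpace ℝ (Fin d) → ℝ), Continuous F → ∀ c : ℝ, 0 < c →
      μ {v | F v = -c} = 0 → μ {v | F v = c} = 0 →
      μ (frontier {v | -c ≤ F v ∧ F v ≤ c}) = 0 := by
    intro F hF c hc h1 h2
    have h := hF.frontier_preimage_subset (Icc (-c) c)
    rw [frontier_Icc (by linarith)] at h
    refine measure_mono_null (fun v hv => ?_) (measure_union_null h1 h2)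
    have hv2 := h hv
    simp only [Set.mem_preimage, Set.mem_insert_iff, Set.mem_singleton_iff] at hv2
    rcases hv2 with h' | h'
    · exact Or.inl h'
    · exact Or.inr h'
  have hfr_inter : ∀ (s t : Set (EuclideanSpace ℝ (Fin d))), μ (frontier s) = 0 →
      μ (frontier t) = 0 → μ (frontier (s ∩ t)) = 0 := by
    intro s t hs ht
    refine measure_mono_null (Set.Subset.trans (frontier_inter_subset s t) ?_)
      (measure_union_null hs ht)
    rintro v (⟨h, _⟩ | ⟨_, h⟩)
    · exact Or.inl h
    · exact Or.inr h
  have hpick : ∀ (F : EuclideanSpace ℝ (Fin d) → ℝ), Measurable F → ∀ b : ℝ, 0 < b →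
      ∃ c : ℝ, 0 < c ∧ c < b ∧ μ {v | F v = c} = 0 ∧ μ {v | F v = -c} = 0 := by
    intro F hF b hb
    have hcnt : Set.Countable {t : ℝ | 0 < μ {v | F v = t}} :=
      Measure.countable_meas_level_set_pos hF
    have hcnt2 : Set.Countable ({t : ℝ | 0 < μ {v | F v = t}} ∪
        (fun t : ℝ => -t) ⁻¹' {t : ℝ | 0 < μ {v | F v = t}}) :=
      hcnt.union (hcnt.preimage neg_injective)
    by_contra hcon
    push_neg at hcon
    have hsub : Set.Ioo (0:ℝ) b ⊆ ({t : ℝ | 0 < μ {v | F v = t}} ∪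
        (fun t : ℝ => -t) ⁻¹' {t : ℝ | 0 < μ {v | F v = t}}) := by
      intro c hc
      by_cases h1 : μ {v | F v = c} = 0
      · right
        exact pos_iff_ne_zero.2 (hcon c hc.1 hc.2 h1)
      · left
        exact pos_iff_ne_zero.2 h1
    have hvol0 : volume ({t : ℝ | 0 < μ {v | F v = t}} ∪
        (fun t : ℝ => -t) ⁻¹' {t : ℝ | 0 < μ {v | F v = t}}) = 0 :=
      hcnt2.measure_zero volume
    have hle := measure_mono (μ := (volume : Measure ℝ)) hsub
    rw [hvol0, Real.volume_Ioo] at hle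
    simp only [nonpos_iff_eq_zero, ENNReal.ofReal_eq_zero] at hle
    linarith
  have hI : ∀ A : Set (EuclideanSpace ℝ (Fin d)), MeasurableSet A → μ (frontier A) = 0 →
      Tendsto (fun z => Q1 z A / T z) atTop
        (𝓝 (μ (A ∩ {v | 0 < (inner ℝ v θstar : ℝ)})).toReal) := by
    intro A hA hfA
    rw [Metric.tendsto_nhds]
    intro ε hε
    have hbandm : ∀ c : ℝ, MeasurableSet {v : EuclideanSpace ℝ (Fin d) |
        -c ≤ (inner ℝ v θstar : ℝ) ∧ (inner ℝ v θstar : ℝ) ≤ c} := by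
      intro c
      rw [Set.setOf_and]
      exact (measurableSet_le measurable_const hgc.measurable).inter
        (measurableSet_le hgc.measurable measurable_const)
    have hiInter : Tendsto (fun n : ℕ => μ {v | -(1/(n+1)) ≤ (inner ℝ v θstar : ℝ) ∧
          (inner ℝ v θstar : ℝ) ≤ 1/(n+1)}) atTop
        (𝓝 (μ (⋂ n : ℕ, {v | -(1/(n+1)) ≤ (inner ℝ v θstar : ℝ) ∧
          (inner ℝ v θstar : ℝ) ≤ 1/(n+1)}))) := by
      apply tendsto_measure_iInter_atTop
      · intro n
        exact (hbandm (1/(n+1))).nullMeasurableSet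
      · intro n m hnm v hv
        obtain ⟨h1, h2⟩ := hv
        have hmn : (1:ℝ)/(m+1) ≤ 1/(n+1) := by
          apply one_div_le_one_div_of_le
          · positivity
          · have := (Nat.cast_le (α := ℝ)).2 hnm
            linarith
        exact ⟨by linarith, by linarith⟩
      · exact ⟨0, measure_ne_top _ _⟩
    have hiempty : (⋂ n : ℕ, {v : EuclideanSpace ℝ (Fin d) | -(1/(n+1)) ≤ (inner ℝ v θstar : ℝ) ∧
        (inner ℝ v θstar : ℝ) ≤ 1/(n+1)}) = {v | (inner ℝ v θstar : ℝ) = 0} := by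
      ext v
      simp only [Set.mem_iInter, Set.mem_setOf_eq]
      constructor
      · intro h
        by_contra hne
        have hpos : 0 < |(inner ℝ v θstar : ℝ)| := abs_pos.2 hne
        obtain ⟨n, hn⟩ := exists_nat_one_div_lt hpos
        have habs : |(inner ℝ v θstar : ℝ)| ≤ 1/(n+1) := abs_le.2 ⟨(h n).1, (h n).2⟩
        have hcast : ((n:ℝ)+1) = ((n+1 : ℕ) : ℝ) := by push_cast; ring
        rw [hcast] at hn
        rw [show ((1:ℝ)/(n+1)) = 1/((n+1:ℕ):ℝ) by push_cast; ring] at habs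
        linarith
      · intro h n
        rw [h]
        have h0 : (0:ℝ) ≤ 1/(n+1) := by positivity
        exact ⟨by linarith, by linarith⟩
    rw [hiempty, hμθs] at hiInter
    have hto : Tendsto (fun n : ℕ => (μ {v | -(1/(n+1)) ≤ (inner ℝ v θstar : ℝ) ∧
        (inner ℝ v θstar : ℝ) ≤ 1/(n+1)}).toReal) atTop (𝓝 0) := by
      have h := (ENNReal.tendsto_toReal (by norm_num : (0:ENNReal) ≠ ⊤)).comp hiInter
      simpa [Function.comp_def] using h
    obtain ⟨n₀, hn₀⟩ := (Metric.tendsto_atTop.1 hto (ε/8) (by linarith)) |>.imp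
      (fun n₀ h => h n₀ le_rfl)
    rw [Real.dist_eq, sub_zero, abs_of_nonneg ENNReal.toReal_nonneg] at hn₀
    obtain ⟨δ', hδ'pos, hδ'lt, hgδ', hgδ'neg⟩ := hpick _ hgc.measurable (1/((n₀:ℝ)+1))
      (by positivity)
    set A₁ := A ∩ {v | δ' < (inner ℝ v θstar : ℝ)} with hA₁
    set A₂ := A ∩ {v | -δ' ≤ (inner ℝ v θstar : ℝ) ∧ (inner ℝ v θstar : ℝ) ≤ δ'} with hA₂
    set A₃ := A ∩ {v | (inner ℝ v θstar : ℝ) < -δ'} with hA₃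
    have hA₁m : MeasurableSet A₁ := hA.inter (measurableSet_lt measurable_const hgc.measurable)
    have hA₂m : MeasurableSet A₂ := hA.inter (hbandm δ')
    have hA₃m : MeasurableSet A₃ := hA.inter (measurableSet_lt hgc.measurable measurable_const)
    have hA₁f : μ (frontier A₁) = 0 := hfr_inter _ _ hfA (hfrIoi _ hgc δ' hgδ')
    have hA₂f : μ (frontier A₂) = 0 := hfr_inter _ _ hfA (hfrIcc _ hgc δ' hδ'pos hgδ'neg hgδ')
    have hA₃f : μ (frontier A₃) = 0 := hfr_inter _ _ hfA (hfrIio _ hgc (-δ') hgδ'neg)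
    have hl1 := hang' A₁ hA₁m hA₁f
    have hl2 := hang' A₂ hA₂m hA₂f
    have hl3 := hang' A₃ hA₃m hA₃f
    -- decomposition
    have hdecomp : ∀ z : ℝ, Q1 z A = Q1 z A₁ + Q1 z A₂ + Q1 z A₃ := by
      intro z
      have hset : {ω | y ω = 1} ∩ ({ω | dir ω ∈ A} ∩ {ω | ‖x ω‖ > z}) =
          ({ω | y ω = 1} ∩ ({ω | dir ω ∈ A₁} ∩ {ω | ‖x ω‖ > z})) ∪
          (({ω | y ω = 1} ∩ ({ω | dir ω ∈ A₂} ∩ {ω | ‖x ω‖ > z})) ∪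
           ({ω | y ω = 1} ∩ ({ω | dir ω ∈ A₃} ∩ {ω | ‖x ω‖ > z}))) := by
        ext ω
        simp only [Set.mem_inter_iff, Set.mem_union, Set.mem_setOf_eq, hA₁, hA₂, hA₃]
        constructor
        · rintro ⟨h1, h2, h3⟩
          by_cases hc1 : δ' < (inner ℝ (dir ω) θstar : ℝ)
          · exact Or.inl ⟨h1, ⟨h2, hc1⟩, h3⟩
          · by_cases hc2 : (inner ℝ (dir ω) θstar : ℝ) < -δ'
            · exact Or.inr (Or.inr ⟨h1, ⟨h2, hc2⟩, h3⟩)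
            · exact Or.inr (Or.inl ⟨h1, ⟨h2, ⟨by linarith [not_lt.1 hc2],
                by linarith [not_lt.1 hc1]⟩⟩, h3⟩)
        · rintro (⟨h1, ⟨h2, _⟩, h3⟩ | ⟨h1, ⟨h2, _⟩, h3⟩ | ⟨h1, ⟨h2, _⟩, h3⟩) <;>
            exact ⟨h1, h2, h3⟩
      have hm2 : MeasurableSet ({ω | y ω = 1} ∩ ({ω | dir ω ∈ A₂} ∩ {ω | ‖x ω‖ > z})) :=
        hy1m.inter ((hdirm hA₂m).inter (hTailm z))
      have hm3 : MeasurableSet ({ω | y ω = 1} ∩ ({ω | dir ω ∈ A₃} ∩ {ω | ‖x ω‖ > z})) :=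
        hy1m.inter ((hdirm hA₃m).inter (hTailm z))
      have hd23 : Disjoint ({ω | y ω = 1} ∩ ({ω | dir ω ∈ A₂} ∩ {ω | ‖x ω‖ > z}))
          ({ω | y ω = 1} ∩ ({ω | dir ω ∈ A₃} ∩ {ω | ‖x ω‖ > z})) := by
        apply Set.disjoint_left.mpr
        rintro ω ⟨-, ⟨-, hb1, -⟩, -⟩ ⟨-, ⟨-, hb2⟩, -⟩
        have hb1' : -δ' ≤ (inner ℝ (dir ω) θstar : ℝ) := hb1
        have hb2' : (inner ℝ (dir ω) θstar : ℝ) < -δ' := hb2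
        linarith
      have hd123 : Disjoint ({ω | y ω = 1} ∩ ({ω | dir ω ∈ A₁} ∩ {ω | ‖x ω‖ > z}))
          (({ω | y ω = 1} ∩ ({ω | dir ω ∈ A₂} ∩ {ω | ‖x ω‖ > z})) ∪
           ({ω | y ω = 1} ∩ ({ω | dir ω ∈ A₃} ∩ {ω | ‖x ω‖ > z}))) := by
        rw [Set.disjoint_union_right]
        constructor
        · apply Set.disjoint_left.mpr
          rintro ω ⟨-, ⟨-, hb1⟩, -⟩ ⟨-, ⟨-, -, hb2⟩, -⟩
          have hb1' : δ' < (inner ℝ (dir ω) θstar : ℝ) := hb1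
          have hb2' : (inner ℝ (dir ω) θstar : ℝ) ≤ δ' := hb2
          linarith
        · apply Set.disjoint_left.mpr
          rintro ω ⟨-, ⟨-, hb1⟩, -⟩ ⟨-, ⟨-, hb2⟩, -⟩
          have hb1' : δ' < (inner ℝ (dir ω) θstar : ℝ) := hb1
          have hb2' : (inner ℝ (dir ω) θstar : ℝ) < -δ' := hb2
          linarith
      simp only [hQ1_def]
      rw [hset, measure_union hd123 (hm2.union hm3), measure_union hd23 hm3,
        ENNReal.toReal_add (measure_ne_top _ _) (by
          exact ENNReal.add_ne_top.2 ⟨measure_ne_top _ _, measure_ne_top _ _⟩),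
        ENNReal.toReal_add (measure_ne_top _ _) (measure_ne_top _ _)]
      ring
    have hdivle : ∀ a b c : ℝ, 0 < c → a ≤ b → a / c ≤ b / c := by
      intro a b c hc h
      rw [div_eq_mul_inv, div_eq_mul_inv]
      exact mul_le_mul_of_nonneg_right h (inv_nonneg.2 hc.le)
    have hexp0 : Tendsto (fun z : ℝ => Real.exp (-(z * δ'))) atTop (𝓝 0) := by
      have hmul : Tendsto (fun z : ℝ => z * δ') atTop atTop :=
        Tendsto.atTop_mul_const hδ'pos tendsto_id
      exact Real.tendsto_exp_neg_atTop_nhds_zero.comp hmul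
    have hdiff0 : Tendsto (fun z => ρ z A₁ / T z - Q1 z A₁ / T z) atTop (𝓝 0) := by
      apply squeeze_zero' (g := fun z => Real.exp (-(z * δ')) * (ρ z A₁ / T z))
      · filter_upwards [eventually_gt_atTop (0:ℝ)] with z hz
        rw [sub_nonneg]
        exact hdivle _ _ _ (hTpos z) (hQ1le z A₁)
      · filter_upwards [eventually_gt_atTop (0:ℝ)] with z hz
        have hb := hboundA δ' hδ'pos A₁ hA₁m (by rw [hA₁]; exact Set.inter_subset_right) z hz
        rw [div_sub_div_same, ← mul_div_assoc]
        exact hdivle _ _ _ (hTpos z) (by nlinarith [hρnonneg z A₁])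
      · simpa using hexp0.mul hl1
    have ht1 : Tendsto (fun z => Q1 z A₁ / T z) atTop (𝓝 ((μ A₁).toReal)) := by
      have h := hl1.sub hdiff0
      rw [sub_zero] at h
      exact h.congr (fun z => by ring)
    have ht3 : Tendsto (fun z => Q1 z A₃ / T z) atTop (𝓝 0) := by
      apply squeeze_zero' (g := fun z => Real.exp (-(z * δ')) * (ρ z A₃ / T z))
      · filter_upwards with z
        exact div_nonneg (hQ1nonneg z A₃) (hTpos z).le
      · filter_upwards [eventually_gt_atTop (0:ℝ)] with z hz
        have hb := hboundB δ' hδ'pos A₃ hA₃m (by rw [hA₃]; exact Set.inter_subset_right) z hz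
        rw [← mul_div_assoc]
        exact hdivle _ _ _ (hTpos z) hb
      · simpa using hexp0.mul hl3
    have hbig : ∀ B : Set (EuclideanSpace ℝ (Fin d)),
        B ⊆ {v | -(1/((n₀:ℝ)+1)) ≤ (inner ℝ v θstar : ℝ) ∧ (inner ℝ v θstar : ℝ) ≤ 1/((n₀:ℝ)+1)} →
        (μ B).toReal < ε/8 := by
      intro B hB
      refine lt_of_le_of_lt ?_ hn₀
      exact ENNReal.toReal_mono (measure_ne_top _ _) (measure_mono hB)
    have hμA₂ : (μ A₂).toReal < ε/8 := by
      apply hbig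
      rw [hA₂]
      rintro v ⟨-, h1, h2⟩
      exact ⟨by linarith, by linarith⟩
    have hgapm : MeasurableSet {v : EuclideanSpace ℝ (Fin d) |
        0 < (inner ℝ v θstar : ℝ) ∧ (inner ℝ v θstar : ℝ) ≤ δ'} := by
      rw [Set.setOf_and]
      exact (measurableSet_lt measurable_const hgc.measurable).inter
        (measurableSet_le hgc.measurable measurable_const)
    have hgap : (μ (A ∩ {v | 0 < (inner ℝ v θstar : ℝ)})).toReal
        = (μ A₁).toReal +
          (μ (A ∩ {v | 0 < (inner ℝ v θstar : ℝ) ∧ (inner ℝ v θstar : ℝ) ≤ δ'})).toReal := by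
      have hsplit2 : A ∩ {v | 0 < (inner ℝ v θstar : ℝ)}
          = A₁ ∪ (A ∩ {v | 0 < (inner ℝ v θstar : ℝ) ∧ (inner ℝ v θstar : ℝ) ≤ δ'}) := by
        ext v
        simp only [hA₁, Set.mem_inter_iff, Set.mem_setOf_eq, Set.mem_union]
        constructor
        · rintro ⟨ha, hg⟩
          by_cases hc : δ' < (inner ℝ v θstar : ℝ)
          · exact Or.inl ⟨ha, hc⟩
          · exact Or.inr ⟨ha, hg, not_lt.1 hc⟩
        · rintro (⟨ha, hg⟩ | ⟨ha, hg, -⟩)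
          · exact ⟨ha, lt_trans hδ'pos hg⟩
          · exact ⟨ha, hg⟩
      have hd : Disjoint A₁ (A ∩ {v | 0 < (inner ℝ v θstar : ℝ) ∧ (inner ℝ v θstar : ℝ) ≤ δ'}) := by
        apply Set.disjoint_left.mpr
        rintro v ⟨-, h1⟩ ⟨-, -, h2⟩
        have h1' : δ' < (inner ℝ v θstar : ℝ) := h1
        linarith
      rw [hsplit2, measure_union hd (hA.inter hgapm),
        ENNReal.toReal_add (measure_ne_top _ _) (measure_ne_top _ _)]
    have hμgapsmall : (μ (A ∩ {v | 0 < (inner ℝ v θstar : ℝ) ∧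
        (inner ℝ v θstar : ℝ) ≤ δ'})).toReal < ε/8 := by
      apply hbig
      rintro v ⟨-, h1, h2⟩
      exact ⟨by linarith, by linarith⟩
    have hev1 : ∀ᶠ z in atTop, |Q1 z A₁ / T z - (μ A₁).toReal| < ε/4 := by
      have h := Metric.tendsto_nhds.1 ht1 (ε/4) (by linarith)
      simpa only [Real.dist_eq] using h
    have hev3 : ∀ᶠ z in atTop, |Q1 z A₃ / T z| < ε/4 := by
      have h := Metric.tendsto_nhds.1 ht3 (ε/4) (by linarith)
      simpa only [Real.dist_eq, sub_zero] using h
    have hev2 : ∀ᶠ z in atTop, ρ z A₂ / T z < (μ A₂).toReal + ε/8 := by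
      have h := Metric.tendsto_nhds.1 hl2 (ε/8) (by linarith)
      filter_upwards [h] with z hz
      rw [Real.dist_eq] at hz
      have h2 := abs_lt.1 hz
      linarith [h2.2]
    filter_upwards [hev1, hev2, hev3, eventually_gt_atTop (0:ℝ)] with z h1 h2 h3 hz
    have hq2 : Q1 z A₂ / T z ≤ ρ z A₂ / T z := hdivle _ _ _ (hTpos z) (hQ1le z A₂)
    have hq2n : 0 ≤ Q1 z A₂ / T z := div_nonneg (hQ1nonneg z A₂) (hTpos z).le
    have h3' := abs_lt.1 h3
    have h1' := abs_lt.1 h1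
    have hgapnn : (0:ℝ) ≤ (μ (A ∩ {v | 0 < (inner ℝ v θstar : ℝ) ∧
        (inner ℝ v θstar : ℝ) ≤ δ'})).toReal := ENNReal.toReal_nonneg
    have hA₂nn : (0:ℝ) ≤ (μ A₂).toReal := ENNReal.toReal_nonneg
    rw [Real.dist_eq, abs_lt]
    have hdz : Q1 z A / T z = Q1 z A₁ / T z + Q1 z A₂ / T z + Q1 z A₃ / T z := by
      rw [hdecomp z, add_div, add_div]
    rw [hdz, hgap]
    constructor
    · linarith [h1'.1, h3'.1]
    · linarith [h1'.2, h3'.2]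
  have hII : ∀ A : Set (EuclideanSpace ℝ (Fin d)), MeasurableSet A → μ (frontier A) = 0 →
      Tendsto (fun z => Q2 z A / T z) atTop
        (𝓝 (μ (A ∩ {v | (inner ℝ v θstar : ℝ) < 0})).toReal) := by
    intro A hA hfA
    have hsp : ∀ z : ℝ, Q2 z A = ρ z A - Q1 z A := by
      intro z
      have h := hsplitP ({ω | dir ω ∈ A} ∩ {ω | ‖x ω‖ > z}) ((hdirm hA).inter (hTailm z))
      simp only [hρ_def, hQ1_def, hQ2_def]
      linarith [h]
    have hval : (μ A).toReal - (μ (A ∩ {v | 0 < (inner ℝ v θstar : ℝ)})).toReal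
        = (μ (A ∩ {v | (inner ℝ v θstar : ℝ) < 0})).toReal := by
      have hAeq : μ A = μ (A ∩ ({v | 0 < (inner ℝ v θstar : ℝ)} ∪ {v | (inner ℝ v θstar : ℝ) < 0})) := by
        refine (measure_inter_conull ?_).symm
        refine measure_mono_null ?_ hμθs
        intro v hv
        simp only [Set.mem_compl_iff, Set.mem_union, Set.mem_setOf_eq] at hv
        push_neg at hv
        have h1 : (inner ℝ v θstar : ℝ) ≤ 0 := hv.1
        have h2 : 0 ≤ (inner ℝ v θstar : ℝ) := hv.2
        show (inner ℝ v θstar : ℝ) = 0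
        linarith
      have hdisj : Disjoint (A ∩ {v | 0 < (inner ℝ v θstar : ℝ)})
          (A ∩ {v | (inner ℝ v θstar : ℝ) < 0}) := by
        apply Set.disjoint_left.mpr
        rintro v ⟨-, h1⟩ ⟨-, h2⟩
        have h1' : 0 < (inner ℝ v θstar : ℝ) := h1
        have h2' : (inner ℝ v θstar : ℝ) < 0 := h2
        linarith
      rw [hAeq, Set.inter_union_distrib_left,
        measure_union hdisj (hA.inter (measurableSet_lt hgc.measurable measurable_const)),
        ENNReal.toReal_add (measure_ne_top _ _) (measure_ne_top _ _)]
      ring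
    have h := (hang' A hA hfA).sub (hI A hA hfA)
    rw [hval] at h
    exact h.congr (fun z => by rw [hsp z, sub_div])
  have hMlim : ∀ c : ℝ, μ {v | (inner ℝ v θ : ℝ) = c} = 0 → μ {v | (inner ℝ v θ : ℝ) = -c} = 0 →
      Tendsto (fun z => (Q1 z {v | (inner ℝ v θ : ℝ) < c} + Q2 z {v | -c < (inner ℝ v θ : ℝ)}) / T z)
        atTop (𝓝 ((μ ({v | (inner ℝ v θ : ℝ) < c} ∩ {v | 0 < (inner ℝ v θstar : ℝ)})).toReal
          + (μ ({v | -c < (inner ℝ v θ : ℝ)} ∩ {v | (inner ℝ v θstar : ℝ) < 0})).toReal)) := by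
    intro c h1 h2
    have l1 := hI {v | (inner ℝ v θ : ℝ) < c} (measurableSet_lt hfc.measurable measurable_const)
      (hfrIio _ hfc c h1)
    have l2 := hII {v | -c < (inner ℝ v θ : ℝ)} (measurableSet_lt measurable_const hfc.measurable)
      (hfrIoi _ hfc (-c) h2)
    exact (l1.add l2).congr (fun z => (add_div _ _ _).symm)
  have hdivle : ∀ a b c : ℝ, 0 < c → a ≤ b → a / c ≤ b / c := by
    intro a b c hc h
    rw [div_eq_mul_inv, div_eq_mul_inv]
    exact mul_le_mul_of_nonneg_right h (inv_nonneg.2 hc.le)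
  have hμle1 : ∀ s : Set (EuclideanSpace ℝ (Fin d)), (μ s).toReal ≤ 1 := by
    intro s
    have h2 : μ s ≤ 1 := prob_le_one
    simpa using ENNReal.toReal_mono (by norm_num) h2
  have hnegpre : (fun v : EuclideanSpace ℝ (Fin d) => -v) ⁻¹' {v | 0 < (inner ℝ v θ : ℝ)}
      = {v | (inner ℝ v θ : ℝ) < 0} := by
    ext v
    simp only [Set.mem_preimage, Set.mem_setOf_eq, inner_neg_left]
    constructor
    · intro h; linarith
    · intro h; linarith
  have hLrw : (nuMeas μ θstar {v | 0 < (inner ℝ v θ : ℝ)}).toReal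
      = (μ ({v | (inner ℝ v θ : ℝ) < (0:ℝ)} ∩ {v | 0 < (inner ℝ v θstar : ℝ)})).toReal
        + (μ ({v | -(0:ℝ) < (inner ℝ v θ : ℝ)} ∩ {v | (inner ℝ v θstar : ℝ) < 0})).toReal := by
    rw [nuMeas, ENNReal.toReal_add (measure_ne_top _ _) (measure_ne_top _ _), hnegpre]
    simp only [neg_zero]
  have hposfac : ∀ s t : ℝ, 0 < s → 0 < s * t → 0 < t := by
    intro s t hs hst
    by_contra hcon
    push_neg at hcon
    linarith [mul_nonneg hs.le (neg_nonneg.2 hcon), hst]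
  have hlsigc : Continuous logisticSigma :=
    (Real.continuous_exp.comp continuous_neg).div
      (continuous_const.add (Real.continuous_exp.comp continuous_neg))
      (fun u => (one_add_exp_pos (-u)).ne')
  have hhm : Measurable fun ω => y ω • x ω := hymeas.smul hxmeas
  have hihm : Measurable fun ω => (inner ℝ (y ω • x ω) θ : ℝ) := hhm.inner measurable_const
  have hFullm : ∀ z : ℝ, MeasurableSet ({ω | logisticSigma (inner ℝ (y ω • x ω) θ : ℝ) *
      ‖y ω • x ω‖ > z ∧ (inner ℝ (y ω • x ω) θ : ℝ) < 0} ∩ {ω | ‖y ω • x ω‖ > z}) := by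
    intro z
    refine MeasurableSet.inter ?_ (measurableSet_lt measurable_const hhm.norm)
    rw [Set.setOf_and]
    exact (measurableSet_lt measurable_const
      ((hlsigc.measurable.comp hihm).mul hhm.norm)).inter
      (measurableSet_lt hihm measurable_const)
  have hupper : ∀ z : ℝ, 0 < z →
      (P ({ω | logisticSigma (inner ℝ (y ω • x ω) θ : ℝ) * ‖y ω • x ω‖ > z ∧
          (inner ℝ (y ω • x ω) θ : ℝ) < 0} ∩ {ω | ‖y ω • x ω‖ > z})).toReal
        ≤ Q1 z {v | (inner ℝ v θ : ℝ) < (0:ℝ)} + Q2 z {v | -(0:ℝ) < (inner ℝ v θ : ℝ)} := by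
    intro z hz
    rw [hsplitP _ (hFullm z)]
    apply add_le_add
    · simp only [hQ1_def]
      apply ENNReal.toReal_mono (measure_ne_top _ _)
      apply measure_mono
      rintro ω ⟨hy1, ⟨-, hneg⟩, htail⟩
      have hy1' : y ω = 1 := hy1
      simp only [Set.mem_setOf_eq, hy1', one_smul] at hneg htail
      have htail' : z < ‖x ω‖ := htail
      have hnx : (0:ℝ) < ‖x ω‖ := lt_trans hz htail'
      refine ⟨hy1', ?_, htail'⟩
      show (inner ℝ (dir ω) θ : ℝ) < 0
      have hk := hkey θ ω hnx.ne'
      by_contra hcon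
      push_neg at hcon
      linarith [mul_nonneg hnx.le hcon, hk, hneg]
    · simp only [hQ2_def]
      apply ENNReal.toReal_mono (measure_ne_top _ _)
      apply measure_mono
      rintro ω ⟨hy2, ⟨-, hneg⟩, htail⟩
      have hy2' : y ω = -1 := hy2
      have hyx : y ω • x ω = -(x ω) := by rw [hy2']; exact neg_one_smul ℝ (x ω)
      simp only [Set.mem_setOf_eq, hyx, inner_neg_left, norm_neg] at hneg htail
      have htail' : z < ‖x ω‖ := htail
      have hnx : (0:ℝ) < ‖x ω‖ := lt_trans hz htail'
      refine ⟨hy2', ?_, htail'⟩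
      show -(0:ℝ) < (inner ℝ (dir ω) θ : ℝ)
      have hk := hkey θ ω hnx.ne'
      have hpos : 0 < (inner ℝ (x ω) θ : ℝ) := by linarith
      have hdpos := hposfac _ _ hnx (by rw [← hk]; exact hpos)
      linarith
  show Tendsto (fun z : ℝ =>
      (P ({ω | logisticSigma (inner ℝ (y ω • x ω) θ : ℝ) * ‖y ω • x ω‖ > z ∧
        (inner ℝ (y ω • x ω) θ : ℝ) < 0} ∩ {ω | ‖y ω • x ω‖ > z})).toReal / T z)
    atTop (𝓝 ((nuMeas μ θstar {v | 0 < (inner ℝ v θ : ℝ)}).toReal))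
  rw [hLrw, Metric.tendsto_nhds]
  intro ε hε
  have hU := hMlim 0 (by simpa using hμθ) (by simpa using hμθ)
  -- choose n₁
  have hGposm : MeasurableSet {v : EuclideanSpace ℝ (Fin d) | 0 < (inner ℝ v θstar : ℝ)} :=
    measurableSet_lt measurable_const hgc.measurable
  have hGnegm : MeasurableSet {v : EuclideanSpace ℝ (Fin d) | (inner ℝ v θstar : ℝ) < 0} :=
    measurableSet_lt hgc.measurable measurable_const
  have hcup1 : Tendsto (fun n : ℕ => μ ({v | (inner ℝ v θ : ℝ) < -(1/(n+1))} ∩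
      {v | 0 < (inner ℝ v θstar : ℝ)})) atTop
      (𝓝 (μ (⋃ n : ℕ, {v | (inner ℝ v θ : ℝ) < -(1/(n+1))} ∩ {v | 0 < (inner ℝ v θstar : ℝ)}))) := by
    apply tendsto_measure_iUnion_atTop
    intro n m hnm v hv
    obtain ⟨h1, h2⟩ := hv
    have hmn : (1:ℝ)/(m+1) ≤ 1/(n+1) := by
      apply one_div_le_one_div_of_le
      · positivity
      · have := (Nat.cast_le (α := ℝ)).2 hnm
        linarith
    exact ⟨by have h1' : (inner ℝ v θ : ℝ) < -(1/(n+1)) := h1; show (inner ℝ v θ : ℝ) < -(1/(m+1)); linarith, h2⟩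
  have hcup2 : Tendsto (fun n : ℕ => μ ({v | (1/(n+1) : ℝ) < (inner ℝ v θ : ℝ)} ∩
      {v | (inner ℝ v θstar : ℝ) < 0})) atTop
      (𝓝 (μ (⋃ n : ℕ, {v | (1/(n+1) : ℝ) < (inner ℝ v θ : ℝ)} ∩ {v | (inner ℝ v θstar : ℝ) < 0}))) := by
    apply tendsto_measure_iUnion_atTop
    intro n m hnm v hv
    obtain ⟨h1, h2⟩ := hv
    have hmn : (1:ℝ)/(m+1) ≤ 1/(n+1) := by
      apply one_div_le_one_div_of_le
      · positivity
      · have := (Nat.cast_le (α := ℝ)).2 hnm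
        linarith
    exact ⟨by have h1' : (1/(n+1) : ℝ) < (inner ℝ v θ : ℝ) := h1; show (1/(m+1) : ℝ) < (inner ℝ v θ : ℝ); linarith, h2⟩
  have hUeq1 : (⋃ n : ℕ, {v : EuclideanSpace ℝ (Fin d) | (inner ℝ v θ : ℝ) < -(1/(n+1))} ∩
      {v | 0 < (inner ℝ v θstar : ℝ)})
      = {v | (inner ℝ v θ : ℝ) < (0:ℝ)} ∩ {v | 0 < (inner ℝ v θstar : ℝ)} := by
    ext v
    simp only [Set.mem_iUnion, Set.mem_inter_iff, Set.mem_setOf_eq]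
    constructor
    · rintro ⟨n, h1, h2⟩
      have hn : (0:ℝ) < 1/(n+1) := by positivity
      exact ⟨by linarith, h2⟩
    · rintro ⟨h1, h2⟩
      obtain ⟨n, hn⟩ := exists_nat_one_div_lt (neg_pos.2 h1)
      exact ⟨n, by linarith, h2⟩
  have hUeq2 : (⋃ n : ℕ, {v : EuclideanSpace ℝ (Fin d) | (1/(n+1) : ℝ) < (inner ℝ v θ : ℝ)} ∩
      {v | (inner ℝ v θstar : ℝ) < 0})
      = {v | -(0:ℝ) < (inner ℝ v θ : ℝ)} ∩ {v | (inner ℝ v θstar : ℝ) < 0} := by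
    ext v
    simp only [Set.mem_iUnion, Set.mem_inter_iff, Set.mem_setOf_eq, neg_zero]
    constructor
    · rintro ⟨n, h1, h2⟩
      have hn : (0:ℝ) < 1/(n+1) := by positivity
      exact ⟨by linarith, h2⟩
    · rintro ⟨h1, h2⟩
      obtain ⟨n, hn⟩ := exists_nat_one_div_lt h1
      exact ⟨n, by linarith, h2⟩
  have hto1 : Tendsto (fun n : ℕ => (μ ({v | (inner ℝ v θ : ℝ) < -(1/(n+1))} ∩
      {v | 0 < (inner ℝ v θstar : ℝ)})).toReal) atTop
      (𝓝 ((μ ({v | (inner ℝ v θ : ℝ) < (0:ℝ)} ∩ {v | 0 < (inner ℝ v θstar : ℝ)})).toReal)) := by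
    rw [← hUeq1]
    exact (ENNReal.tendsto_toReal (measure_ne_top _ _)).comp hcup1
  have hto2 : Tendsto (fun n : ℕ => (μ ({v | (1/(n+1) : ℝ) < (inner ℝ v θ : ℝ)} ∩
      {v | (inner ℝ v θstar : ℝ) < 0})).toReal) atTop
      (𝓝 ((μ ({v | -(0:ℝ) < (inner ℝ v θ : ℝ)} ∩ {v | (inner ℝ v θstar : ℝ) < 0})).toReal)) := by
    rw [← hUeq2]
    exact (ENNReal.tendsto_toReal (measure_ne_top _ _)).comp hcup2
  have hev1' : ∀ᶠ n : ℕ in atTop,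
      (μ ({v | (inner ℝ v θ : ℝ) < (0:ℝ)} ∩ {v | 0 < (inner ℝ v θstar : ℝ)})).toReal - ε/16
      < (μ ({v | (inner ℝ v θ : ℝ) < -(1/(n+1))} ∩ {v | 0 < (inner ℝ v θstar : ℝ)})).toReal := by
    filter_upwards [Metric.tendsto_nhds.1 hto1 (ε/16) (by linarith)] with n hn
    rw [Real.dist_eq] at hn
    have := abs_lt.1 hn
    linarith [this.1]
  have hev2' : ∀ᶠ n : ℕ in atTop,
      (μ ({v | -(0:ℝ) < (inner ℝ v θ : ℝ)} ∩ {v | (inner ℝ v θstar : ℝ) < 0})).toReal - ε/16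
      < (μ ({v | (1/(n+1) : ℝ) < (inner ℝ v θ : ℝ)} ∩ {v | (inner ℝ v θstar : ℝ) < 0})).toReal := by
    filter_upwards [Metric.tendsto_nhds.1 hto2 (ε/16) (by linarith)] with n hn
    rw [Real.dist_eq] at hn
    have := abs_lt.1 hn
    linarith [this.1]
  obtain ⟨n₁, hn1, hn2⟩ := (hev1'.and hev2').exists
  obtain ⟨c', hc'pos, hc'lt, hfc', hfc'neg⟩ := hpick _ hfc.measurable (1/((n₁:ℝ)+1))
    (by positivity)
  set η := min (ε/16) (1/2) with hη_def
  have hηpos : 0 < η := lt_min (by linarith) (by norm_num)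
  have hηle : η ≤ 1/2 := min_le_right _ _
  have hηleε : η ≤ ε/16 := min_le_left _ _
  have hone : (0:ℝ) < 1 + η := by linarith
  have hrp : 1 - 2*η ≤ (1+η) ^ (-α) := rpow_neg_ge hηpos hηle hα2.le (by linarith)
  have hrple1 : (1+η) ^ (-α) ≤ 1 :=
    Real.rpow_le_one_of_one_le_of_nonpos (by linarith) (by linarith)
  have hW := hMlim (-c') hfc'neg (by simpa using hfc')
  have hΛ1 : (μ ({v | (inner ℝ v θ : ℝ) < (0:ℝ)} ∩ {v | 0 < (inner ℝ v θstar : ℝ)})).toReal - ε/16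
      < (μ ({v | (inner ℝ v θ : ℝ) < -c'} ∩ {v | 0 < (inner ℝ v θstar : ℝ)})).toReal := by
    refine lt_of_lt_of_le hn1 (ENNReal.toReal_mono (measure_ne_top _ _) (measure_mono ?_))
    rintro v ⟨h1, h2⟩
    have h1' : (inner ℝ v θ : ℝ) < -(1/(n₁+1)) := h1
    exact ⟨by show (inner ℝ v θ : ℝ) < -c'; linarith, h2⟩
  have hΛ2 : (μ ({v | -(0:ℝ) < (inner ℝ v θ : ℝ)} ∩ {v | (inner ℝ v θstar : ℝ) < 0})).toReal - ε/16
      < (μ ({v | -(-c') < (inner ℝ v θ : ℝ)} ∩ {v | (inner ℝ v θstar : ℝ) < 0})).toReal := by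
    refine lt_of_lt_of_le hn2 (ENNReal.toReal_mono (measure_ne_top _ _) (measure_mono ?_))
    rintro v ⟨h1, h2⟩
    have h1' : (1:ℝ)/(n₁+1) < (inner ℝ v θ : ℝ) := h1
    refine ⟨?_, h2⟩
    show -(-c') < (inner ℝ v θ : ℝ)
    rw [neg_neg]
    linarith
  have hregT : ∀ t : ℝ, 0 < t → Tendsto (fun z => T (t*z) / T z) atTop (𝓝 (t^(-α))) :=
    fun t ht => hreg t ht
  have hcomp := hW.comp (Tendsto.const_mul_atTop hone tendsto_id)
  have hVlim := (hcomp.mul (hregT (1+η) hone)).congr (fun z => by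
    simp only [Function.comp_apply, id_eq]
    rw [div_mul_div_cancel₀ (hTpos ((1+η)*z)).ne'])
  -- lower bound on the limit of hVlim
  set Λ1 := (μ ({v | (inner ℝ v θ : ℝ) < -c'} ∩ {v | 0 < (inner ℝ v θstar : ℝ)})).toReal with hΛ1_def
  set Λ2 := (μ ({v | -(-c') < (inner ℝ v θ : ℝ)} ∩ {v | (inner ℝ v θstar : ℝ) < 0})).toReal with hΛ2_def
  set L1 := (μ ({v | (inner ℝ v θ : ℝ) < (0:ℝ)} ∩ {v | 0 < (inner ℝ v θstar : ℝ)})).toReal with hL1_def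
  set L2 := (μ ({v | -(0:ℝ) < (inner ℝ v θ : ℝ)} ∩ {v | (inner ℝ v θstar : ℝ) < 0})).toReal with hL2_def
  have hΛ1le : Λ1 ≤ 1 := hμle1 _
  have hΛ2le : Λ2 ≤ 1 := hμle1 _
  have hΛ1nn : 0 ≤ Λ1 := ENNReal.toReal_nonneg
  have hΛ2nn : 0 ≤ Λ2 := ENNReal.toReal_nonneg
  have hVlimval : (L1 + L2) - ε/2 < (Λ1 + Λ2) * (1+η) ^ (-α) := by
    have h1 : Λ1 + Λ2 - ε/4 ≤ (Λ1 + Λ2) * (1+η) ^ (-α) := by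
      have h2 : (Λ1 + Λ2) * (1 - 2*η) ≤ (Λ1 + Λ2) * (1+η) ^ (-α) :=
        mul_le_mul_of_nonneg_left hrp (by linarith)
      have h3 : (Λ1 + Λ2) * (2*η) ≤ 2 * (2*η) := by
        apply mul_le_mul_of_nonneg_right (by linarith) (by linarith)
      have h4 : (2:ℝ) * (2*η) ≤ ε/4 := by linarith
      linarith [h2, h3, h4]
    linarith [hΛ1, hΛ2, h1, hε]
  -- choose z₁
  set z₁ := max 1 ((-Real.log η) / ((1+η)*c')) with hz₁_def
  have hmpos : (0:ℝ) < (1+η)*c' := mul_pos hone hc'pos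
  have hexpz : ∀ z : ℝ, z₁ ≤ z → Real.exp ((1+η)*z*(-c')) ≤ η := by
    intro z hz
    have h1 : (-Real.log η)/((1+η)*c') ≤ z := le_trans (le_max_right _ _) hz
    rw [div_le_iff₀ hmpos] at h1
    have h3 : (1+η)*z*(-c') ≤ Real.log η := by linarith [h1]
    calc Real.exp ((1+η)*z*(-c')) ≤ Real.exp (Real.log η) := Real.exp_le_exp.2 h3
      _ = η := Real.exp_log hηpos
  have hlower : ∀ z : ℝ, z₁ ≤ z →
      Q1 ((1+η)*z) {v | (inner ℝ v θ : ℝ) < -c'} + Q2 ((1+η)*z) {v | -(-c') < (inner ℝ v θ : ℝ)}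
        ≤ (P ({ω | logisticSigma (inner ℝ (y ω • x ω) θ : ℝ) * ‖y ω • x ω‖ > z ∧
          (inner ℝ (y ω • x ω) θ : ℝ) < 0} ∩ {ω | ‖y ω • x ω‖ > z})).toReal := by
    intro z hz
    have hz0 : (0:ℝ) < z := lt_of_lt_of_le zero_lt_one (le_trans (le_max_left _ _) hz)
    have hG2m : MeasurableSet ({ω | y ω = -1} ∩
        ({ω | dir ω ∈ {v | -(-c') < (inner ℝ v θ : ℝ)}} ∩ {ω | ‖x ω‖ > (1+η)*z})) :=
      hy2m.inter ((hdirm (measurableSet_lt measurable_const hfc.measurable)).inter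
        (hTailm ((1+η)*z)))
    have hdisjG : Disjoint ({ω | y ω = 1} ∩
        ({ω | dir ω ∈ {v | (inner ℝ v θ : ℝ) < -c'}} ∩ {ω | ‖x ω‖ > (1+η)*z}))
        ({ω | y ω = -1} ∩
        ({ω | dir ω ∈ {v | -(-c') < (inner ℝ v θ : ℝ)}} ∩ {ω | ‖x ω‖ > (1+η)*z})) := by
      apply Set.disjoint_left.mpr
      rintro ω ⟨ha, -⟩ ⟨hb, -⟩
      have ha' : y ω = 1 := ha
      have hb' : y ω = -1 := hb
      rw [ha'] at hb'
      norm_num at hb'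
    have hsub : ({ω | y ω = 1} ∩
        ({ω | dir ω ∈ {v | (inner ℝ v θ : ℝ) < -c'}} ∩ {ω | ‖x ω‖ > (1+η)*z})) ∪
        ({ω | y ω = -1} ∩
        ({ω | dir ω ∈ {v | -(-c') < (inner ℝ v θ : ℝ)}} ∩ {ω | ‖x ω‖ > (1+η)*z}))
        ⊆ {ω | logisticSigma (inner ℝ (y ω • x ω) θ : ℝ) * ‖y ω • x ω‖ > z ∧
          (inner ℝ (y ω • x ω) θ : ℝ) < 0} ∩ {ω | ‖y ω • x ω‖ > z} := by
      have hqz : (0:ℝ) < (1+η)*z := mul_pos hone hz0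
      have hσ1 : 1 ≤ (1 + η) * logisticSigma ((1+η)*z*(-c')) := lsig_mul_ge (hexpz z hz)
      have hσpos := lsig_pos ((1+η)*z*(-c'))
      rintro ω (⟨h1, hd, ht⟩ | ⟨h1, hd, ht⟩)
      · have hy1' : y ω = 1 := h1
        have hyx : y ω • x ω = x ω := by rw [hy1', one_smul]
        have ht' : (1+η)*z < ‖x ω‖ := ht
        have hnx : (0:ℝ) < ‖x ω‖ := lt_trans hqz ht'
        have hd' : (inner ℝ (dir ω) θ : ℝ) < -c' := hd
        have hk := hkey θ ω hnx.ne'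
        have hu : (inner ℝ (x ω) θ : ℝ) ≤ (1+η)*z*(-c') := by
          rw [hk]
          linarith [mul_le_mul_of_nonneg_left hd'.le hnx.le,
            mul_nonneg (sub_nonneg.2 ht'.le) hc'pos.le]
        have hu0 : (inner ℝ (x ω) θ : ℝ) < 0 := by
          linarith [hu, mul_pos (mul_pos hone hz0) hc'pos]
        refine ⟨⟨?_, ?_⟩, ?_⟩
        · show z < logisticSigma (inner ℝ (y ω • x ω) θ : ℝ) * ‖y ω • x ω‖
          rw [hyx]
          have e1 : logisticSigma ((1+η)*z*(-c')) * ((1+η)*z)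
              < logisticSigma ((1+η)*z*(-c')) * ‖x ω‖ :=
            mul_lt_mul_of_pos_left ht' hσpos
          have e2 : z ≤ logisticSigma ((1+η)*z*(-c')) * ((1+η)*z) := by
            linarith [mul_le_mul_of_nonneg_left hσ1 hz0.le]
          have e3 : logisticSigma ((1+η)*z*(-c')) * ‖x ω‖
              ≤ logisticSigma ((inner ℝ (x ω) θ : ℝ)) * ‖x ω‖ :=
            mul_le_mul_of_nonneg_right (lsig_antitone hu) (norm_nonneg _)
          linarith
        · show (inner ℝ (y ω • x ω) θ : ℝ) < 0
          rw [hyx]; exact hu0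
        · show z < ‖y ω • x ω‖
          rw [hyx]
          linarith [mul_pos hηpos hz0, ht']
      · have hy2' : y ω = -1 := h1
        have hyx : y ω • x ω = -(x ω) := by rw [hy2']; exact neg_one_smul ℝ (x ω)
        have ht' : (1+η)*z < ‖x ω‖ := ht
        have hnx : (0:ℝ) < ‖x ω‖ := lt_trans hqz ht'
        have hd' : -(-c') < (inner ℝ (dir ω) θ : ℝ) := hd
        rw [neg_neg] at hd'
        have hk := hkey θ ω hnx.ne'
        have hu : (inner ℝ (-(x ω)) θ : ℝ) ≤ (1+η)*z*(-c') := by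
          rw [inner_neg_left, hk]
          linarith [mul_nonneg hnx.le (sub_nonneg.2 hd'.le),
            mul_nonneg (sub_nonneg.2 ht'.le) hc'pos.le]
        have hu0 : (inner ℝ (-(x ω)) θ : ℝ) < 0 := by
          rw [inner_neg_left]
          linarith [mul_pos hnx (lt_trans hc'pos hd'), hk]
        refine ⟨⟨?_, ?_⟩, ?_⟩
        · show z < logisticSigma (inner ℝ (y ω • x ω) θ : ℝ) * ‖y ω • x ω‖
          rw [hyx, norm_neg]
          have e1 : logisticSigma ((1+η)*z*(-c')) * ((1+η)*z)
              < logisticSigma ((1+η)*z*(-c')) * ‖x ω‖ :=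
            mul_lt_mul_of_pos_left ht' hσpos
          have e2 : z ≤ logisticSigma ((1+η)*z*(-c')) * ((1+η)*z) := by
            linarith [mul_le_mul_of_nonneg_left hσ1 hz0.le]
          have e3 : logisticSigma ((1+η)*z*(-c')) * ‖x ω‖
              ≤ logisticSigma ((inner ℝ (-(x ω)) θ : ℝ)) * ‖x ω‖ :=
            mul_le_mul_of_nonneg_right (lsig_antitone hu) (norm_nonneg _)
          linarith
        · show (inner ℝ (y ω • x ω) θ : ℝ) < 0
          rw [hyx]; exact hu0
        · show z < ‖y ω • x ω‖
          rw [hyx, norm_neg]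
          linarith [mul_pos hηpos hz0, ht']
    have hQsum : Q1 ((1+η)*z) {v | (inner ℝ v θ : ℝ) < -c'}
        + Q2 ((1+η)*z) {v | -(-c') < (inner ℝ v θ : ℝ)}
        = (P (({ω | y ω = 1} ∩
          ({ω | dir ω ∈ {v | (inner ℝ v θ : ℝ) < -c'}} ∩ {ω | ‖x ω‖ > (1+η)*z})) ∪
          ({ω | y ω = -1} ∩
          ({ω | dir ω ∈ {v | -(-c') < (inner ℝ v θ : ℝ)}} ∩ {ω | ‖x ω‖ > (1+η)*z})))).toReal := by
      simp only [hQ1_def, hQ2_def]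
      rw [measure_union hdisjG hG2m,
        ENNReal.toReal_add (measure_ne_top _ _) (measure_ne_top _ _)]
    rw [hQsum]
    exact ENNReal.toReal_mono (measure_ne_top _ _) (measure_mono hsub)
  -- finish
  have hUev := Metric.tendsto_nhds.1 hU (ε/2) (by linarith)
  have hVev := Metric.tendsto_nhds.1 hVlim (ε/4) (by linarith)
  filter_upwards [hUev, hVev, eventually_ge_atTop z₁, eventually_gt_atTop (0:ℝ)]
    with z hUz hVz hz1 hz0
  have hup := hupper z hz0
  have hlo := hlower z hz1
  have hub := hdivle _ _ _ (hTpos z) hup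
  have hlb := hdivle _ _ _ (hTpos z) hlo
  rw [Real.dist_eq] at hUz hVz
  have hUz' := abs_lt.1 hUz
  have hVz' := abs_lt.1 hVz
  rw [Real.dist_eq, abs_lt]
  constructor
  · linarith [hVz'.1]
  · linarith [hUz'.2]
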